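/- There exist survival functions F₁, F₂, G₁, G₂ on [0,∞) (decreasing, continuous, F_i(0)=G_i(0)=1, tending to 0) such that F_i(t) ≤ G_i(t) for all t and i = 1,2, yet [F₁(t)+F₂(t)]²/4 ≥ G₁(t)G₂(t) for all t, with strict inequality for some t in both families of inequalities. -/

import Mathlib

open Filter

noncomputable def gPoly : ℝ → ℝ := fun a => a^5 + a^2/2 - a^8/2

lemma gPoly_hasDeriv (a : ℝ) : HasDerivAt gPoly (5*a^4 + a - 4*a^7) a := by
  have h1 : HasDerivAt (fun a : ℝ => a^5) (5*a^4) a := by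
    simpa using hasDerivAt_pow 5 a
  have h2 : HasDerivAt (fun a : ℝ => a^2/2) a a := by
    have := (hasDerivAt_pow 2 a).div_const 2
    simpa using this
  have h3 : HasDerivAt (fun a : ℝ => a^8/2) (4*a^7) a := by
    have := (hasDerivAt_pow 8 a).div_const 2
    norm_num at this
    exact this.congr_deriv (by ring)
  exact (h1.add h2).sub h3

lemma gPoly_cont : Continuous gPoly := by
  unfold gPoly; continuity

lemma gPoly_monoOn : MonotoneOn gPoly (Set.Icc (0:ℝ) 1) := by
  apply monotoneOn_of_deriv_nonneg (convex_Icc 0 1)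
  · exact gPoly_cont.continuousOn
  · intro a _
    exact (gPoly_hasDeriv a).differentiableAt.differentiableWithinAt
  · intro a ha
    rw [interior_Icc] at ha
    rw [(gPoly_hasDeriv a).deriv]
    nlinarith [ha.1.le, ha.2.le, pow_le_one₀ ha.1.le ha.2.le (n:=3),
      mul_nonneg (mul_nonneg ha.1.le ha.1.le) ha.1.le, sq_nonneg (a^2), sq_nonneg a,
      mul_nonneg (pow_nonneg ha.1.le 4) (sub_nonneg.mpr (pow_le_one₀ ha.1.le ha.2.le (n:=3)))]

lemma e_tendsto : Tendsto (fun t : ℝ => Real.exp (-(t/4))) atTop (nhds 0) := by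
  apply Real.tendsto_exp_atBot.comp
  apply Filter.tendsto_neg_atBot_iff.mpr
  exact Tendsto.atTop_div_const (by norm_num) tendsto_id

lemma e_anti : AntitoneOn (fun t : ℝ => Real.exp (-(t/4))) (Set.Ici 0) := by
  intro s _ t _ hst
  exact Real.exp_le_exp.mpr (by linarith)

lemma e_mem {t : ℝ} (ht : 0 ≤ t) : Real.exp (-(t/4)) ∈ Set.Icc (0:ℝ) 1 :=
  ⟨(Real.exp_pos _).le, Real.exp_le_one_iff.mpr (by linarith)⟩

theorem stmt_18 :
    ∃ F₁ F₂ G₁ G₂ : ℝ → ℝ,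
      (∀ H ∈ [F₁, F₂, G₁, G₂], AntitoneOn H (Set.Ici 0) ∧ Continuous H ∧ H 0 = 1 ∧
        Tendsto H atTop (nhds 0)) ∧
      (∀ t, 0 ≤ t → F₁ t ≤ G₁ t ∧ F₂ t ≤ G₂ t) ∧
      (∀ t, 0 ≤ t → G₁ t * G₂ t ≤ ((F₁ t + F₂ t) / 2) ^ 2) ∧
      (∃ t, 0 ≤ t ∧ (F₁ t < G₁ t ∨ F₂ t < G₂ t)) ∧
      (∃ t, 0 ≤ t ∧ G₁ t * G₂ t < ((F₁ t + F₂ t) / 2) ^ 2) := by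
  refine ⟨fun t => Real.exp (-(t/4)) ^ 8,
          fun t => gPoly (Real.exp (-(t/4))),
          fun t => Real.exp (-(t/4)) ^ 8,
          fun t => Real.exp (-(t/4)) ^ 2, ?_, ?_, ?_, ?_, ?_⟩
  · intro H hH
    have hpow : ∀ n : ℕ, n ≠ 0 → AntitoneOn (fun t : ℝ => Real.exp (-(t/4)) ^ n) (Set.Ici 0) ∧
        Continuous (fun t : ℝ => Real.exp (-(t/4)) ^ n) ∧
        (fun t : ℝ => Real.exp (-(t/4)) ^ n) 0 = 1 ∧
        Tendsto (fun t : ℝ => Real.exp (-(t/4)) ^ n) atTop (nhds 0) := by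
      intro n hn
      refine ⟨?_, by continuity, by simp, ?_⟩
      · intro s hs t ht hst
        exact pow_le_pow_left₀ (Real.exp_pos _).le (e_anti hs ht hst) n
      · simpa [zero_pow hn] using e_tendsto.pow n
    have hF₂ : AntitoneOn (fun t : ℝ => gPoly (Real.exp (-(t/4)))) (Set.Ici 0) ∧
        Continuous (fun t : ℝ => gPoly (Real.exp (-(t/4)))) ∧
        (fun t : ℝ => gPoly (Real.exp (-(t/4)))) 0 = 1 ∧
        Tendsto (fun t : ℝ => gPoly (Real.exp (-(t/4)))) atTop (nhds 0) := by
      refine ⟨?_, ?_, ?_, ?_⟩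
      · intro s hs t ht hst
        exact gPoly_monoOn (e_mem ht) (e_mem hs) (e_anti hs ht hst)
      · exact gPoly_cont.comp (by continuity)
      · norm_num [gPoly]
      · have : Tendsto (fun t : ℝ => gPoly (Real.exp (-(t/4)))) atTop (nhds (gPoly 0)) :=
          (gPoly_cont.tendsto 0).comp e_tendsto
        simpa [gPoly] using this
    simp only [List.mem_cons, List.not_mem_nil, or_false] at hH
    rcases hH with rfl | rfl | rfl | rfl
    · exact hpow 8 (by norm_num)
    · exact hF₂
    · exact hpow 8 (by norm_num)
    · exact hpow 2 (by norm_num)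
  · intro t ht
    set a := Real.exp (-(t/4)) with ha
    obtain ⟨h0, h1⟩ := e_mem ht
    refine ⟨le_refl _, ?_⟩
    simp only [gPoly]
    nlinarith [mul_nonneg (sq_nonneg a) (sq_nonneg (a^3 - 1))]
  · intro t ht
    set a := Real.exp (-(t/4)) with ha
    obtain ⟨h0, h1⟩ := e_mem ht
    simp only [gPoly]
    nlinarith [sq_nonneg (a^4 - a), pow_nonneg h0 5,
      mul_nonneg (pow_nonneg h0 5) (sq_nonneg (a^4 - a)), sq_nonneg ((a^4 - a)^2)]
  · refine ⟨1, by norm_num, Or.inr ?_⟩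
    set a := Real.exp (-((1:ℝ)/4)) with ha
    have h0 : 0 < a := Real.exp_pos _
    have h1 : a < 1 := by rw [ha, Real.exp_lt_one_iff]; norm_num
    have h3 : a^3 < 1 := pow_lt_one₀ h0.le h1 (by norm_num)
    have key : 0 < a^2 * (a^3 - 1)^2 := by
      have := mul_pos (mul_pos h0 h0) (mul_pos (sub_pos.2 h3) (sub_pos.2 h3))
      nlinarith [this]
    simp only [gPoly]
    nlinarith [key]
  · refine ⟨1, by norm_num, ?_⟩
    set a := Real.exp (-((1:ℝ)/4)) with ha
    have h0 : 0 < a := Real.exp_pos _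
    have h1 : a < 1 := by rw [ha, Real.exp_lt_one_iff]; norm_num
    have h3 : a^3 < 1 := pow_lt_one₀ h0.le h1 (by norm_num)
    have ha4 : a^4 < a := by nlinarith [mul_lt_mul_of_pos_left h3 h0]
    have hd : 0 < (a^4 - a)^2 := by
      have := mul_pos_of_neg_of_neg (sub_neg.2 ha4) (sub_neg.2 ha4)
      nlinarith [this]
    have h5 : 0 < a^5 := pow_pos h0 5
    simp only [gPoly]
    nlinarith [mul_pos h5 hd, sq_nonneg ((a^4 - a)^2)]
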